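/- Let ι be a countable type, X : ι → ℝ injective, and w : ι → ℝ with w(i) > 0 for all i and ∑ᵢ |X(i)|ⁿ·w(i) < ∞ for every natural number n. Fix N ≥ 1, assume ι has at least N elements, and let q₀,…,q_{N−1} : ℝ → ℝ be polynomials with deg(q_m) = m such that the functions p_m : ι → ℝ, p_m(i) := q_m(X(i))·√(w(i)), form an orthonormal family in ℓ²(ι), i.e., ∑ᵢ p_m(i)·p_l(i) = 1 if m = l and = 0 otherwise (0 ≤ m, l ≤ N−1). Define the Christoffel–Darboux kernel K(i,j) := ∑_{m=0}^{N−1} p_m(i)·p_m(j), and for an N-element finite subset A ⊆ ι set V(A) := ∏_{1 ≤ s < t ≤ N}(X(a_s) − X(a_t))² (for any enumeration a₁,…,a_N of A) and W(A) := ∏_{i∈A} w(i), with normalization Z := ∑_{A : |A| = N} V(A)·W(A) ∈ (0,∞). Then for every n ≥ 1 and all pairwise distinct i₁,…,iₙ ∈ ι: ∑_{A : |A| = N, {i₁,…,iₙ} ⊆ A} (V(A)·W(A))/Z = det [K(i_s, i_t)]_{s,t=1}^{n}. -/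

import Mathlib

open scoped BigOperators

/-- The squared Vandermonde factor `V(A) = ∏_{s<t} (X(a_s) − X(a_t))²` of a finite set
`A`, written (using injectivity of `X`) as the product over the pairs `(i,j) ∈ A × A`
with `X i < X j` of `(X i − X j)²`; this is independent of any enumeration of `A`. -/
noncomputable def vandermondeSq {ι : Type*} (X : ι → ℝ) (A : Finset ι) : ℝ :=
  ∏ p ∈ (A ×ˢ A).filter (fun p => X p.1 < X p.2), (X p.1 - X p.2) ^ 2

/-- The weight `W(A) = ∏_{i ∈ A} w(i)` of a finite set `A`. -/
noncomputable def weightProd {ι : Type*} (w : ι → ℝ) (A : Finset ι) : ℝ :=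
  ∏ i ∈ A, w i

/-- The normalized function `p_m(i) = q_m(X i) · √(w i)` attached to a polynomial `q`. -/
noncomputable def opFun {ι : Type*} (q : Polynomial ℝ) (X : ι → ℝ) (w : ι → ℝ)
    (i : ι) : ℝ :=
  q.eval (X i) * Real.sqrt (w i)



open Finset Matrix

noncomputable def dKer {ι : Type} (K : ι → ι → ℝ) (A : Finset ι) : ℝ :=
  Matrix.det (Matrix.of fun s t : Fin A.card =>
    K ((A.equivFin.symm s : ι)) ((A.equivFin.symm t : ι)))

lemma intOut {ι : Type} (K : ι → ι → ℝ) (N : ℕ)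
    (hrep : ∀ i j, HasSum (fun y => K i y * K y j) (K i j))
    (htr : HasSum (fun y => K y y) (N : ℝ))
    (k : ℕ) (x : Fin k → ι) :
    HasSum (fun y => Matrix.det (Matrix.of fun s t : Fin (k+1) =>
        K ((Fin.cons y x : Fin _ → ι) s) ((Fin.cons y x : Fin _ → ι) t)))
      (((N : ℝ) - k) * Matrix.det (Matrix.of fun s t : Fin k => K (x s) (x t))) := by
  match k with
  | 0 =>
    have h : (fun y => Matrix.det (Matrix.of fun s t : Fin 1 =>
        K ((Fin.cons y x : Fin _ → ι) s) ((Fin.cons y x : Fin _ → ι) t))) = fun y => K y y := by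
      funext y
      rw [Matrix.det_fin_one]
      simp
    rw [h]
    simpa using htr
  | (k'+1) =>
    set B : Matrix (Fin (k'+1)) (Fin (k'+1)) ℝ :=
      Matrix.of fun s t => K (x s) (x t) with hB
    set D : Fin (k'+1) → Fin (k'+1) → Matrix (Fin k') (Fin k') ℝ :=
      fun s t => Matrix.of fun s' t' => K (x (s.succAbove s')) (x (t.succAbove t')) with hD
    have hDB : ∀ s t, D s t = B.submatrix s.succAbove t.succAbove := by
      intro s t; ext s' t'; rfl
    -- expansion of the determinant
    have EXP : ∀ y, Matrix.det (Matrix.of fun s t : Fin (k'+2) =>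
        K ((Fin.cons y x : Fin _ → ι) s) ((Fin.cons y x : Fin _ → ι) t)) =
        K y y * B.det + ∑ t : Fin (k'+1), ∑ s : Fin (k'+1),
          (-((-1:ℝ)^((s:ℕ)+(t:ℕ)) * (D s t).det)) * (K y (x t) * K (x s) y) := by
      intro y
      set M : Matrix (Fin (k'+2)) (Fin (k'+2)) ℝ :=
        Matrix.of fun s t => K ((Fin.cons y x : Fin _ → ι) s) ((Fin.cons y x : Fin _ → ι) t) with hM
      rw [Matrix.det_succ_row_zero, Fin.sum_univ_succ]
      congr 1
      · -- j = 0 term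
        have h0 : M.submatrix Fin.succ ((0 : Fin (k'+2)).succAbove) = B := by
          ext s t
          simp [hM, hB, Fin.succAbove_zero]
        rw [h0]
        simp [hM]
      · -- j = succ terms
        refine Finset.sum_congr rfl fun t _ => ?_
        have hC : M.submatrix Fin.succ (Fin.succ t).succAbove =
            Matrix.of fun s u : Fin (k'+1) =>
              K (x s) ((Fin.cons y x : Fin _ → ι) ((Fin.succ t).succAbove u)) := by
          ext s u
          simp [hM]
        have hCdet : (M.submatrix Fin.succ (Fin.succ t).succAbove).det =
            ∑ s : Fin (k'+1), (-1:ℝ)^(s:ℕ) * K (x s) y * (D s t).det := by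
          rw [hC, Matrix.det_succ_column_zero]
          refine Finset.sum_congr rfl fun s _ => ?_
          congr 1
          · congr 1
            ext s' t'
            simp [hD, Fin.succ_succAbove_succ]
        rw [hCdet, Finset.mul_sum]
        refine Finset.sum_congr rfl fun s _ => ?_
        have hent : M 0 (Fin.succ t) = K y (x t) := by simp [hM]
        rw [hent, Fin.val_succ, pow_succ, pow_add]
        ring
    have H : HasSum (fun y => K y y * B.det + ∑ t : Fin (k'+1), ∑ s : Fin (k'+1),
          (-((-1:ℝ)^((s:ℕ)+(t:ℕ)) * (D s t).det)) * (K y (x t) * K (x s) y))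
        ((N:ℝ) * B.det + ∑ t : Fin (k'+1), ∑ s : Fin (k'+1),
          (-((-1:ℝ)^((s:ℕ)+(t:ℕ)) * (D s t).det)) * B s t) := by
      refine (htr.mul_right _).add (hasSum_sum fun t _ => hasSum_sum fun s _ => ?_)
      have h := (hrep (x s) (x t)).mul_left (-((-1:ℝ)^((s:ℕ)+(t:ℕ)) * (D s t).det))
      have hfun : (fun y => (-((-1:ℝ)^((s:ℕ)+(t:ℕ)) * (D s t).det)) * (K (x s) y * K y (x t)))
          = fun y => (-((-1:ℝ)^((s:ℕ)+(t:ℕ)) * (D s t).det)) * (K y (x t) * K (x s) y) := by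
        funext y; ring
      rw [hfun] at h
      simpa [hB] using h
    have hval : (N:ℝ) * B.det + ∑ t : Fin (k'+1), ∑ s : Fin (k'+1),
          (-((-1:ℝ)^((s:ℕ)+(t:ℕ)) * (D s t).det)) * B s t
        = ((N : ℝ) - (k'+1)) * B.det := by
      have hcol : ∀ t : Fin (k'+1), ∑ s : Fin (k'+1),
          (-((-1:ℝ)^((s:ℕ)+(t:ℕ)) * (D s t).det)) * B s t = -B.det := by
        intro t
        rw [Matrix.det_succ_column B t, ← Finset.sum_neg_distrib]
        refine Finset.sum_congr rfl fun s _ => ?_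
        rw [hDB]
        ring
      rw [Finset.sum_congr rfl fun t _ => hcol t]
      simp [Finset.sum_const, Finset.card_univ]
      push_cast
      ring
    rw [funext EXP]
    have hcast : ((N : ℝ) - ((k'+1 : ℕ) : ℝ)) * B.det = ((N:ℝ) - ((k':ℝ)+1)) * B.det := by
      push_cast; ring
    rw [hcast, ← hval]
    exact H

lemma dKer_eq {ι : Type} [DecidableEq ι] (K : ι → ι → ℝ) {m : ℕ} (z : Fin m → ι)
    (hz : Function.Injective z) :
    dKer K (Finset.image z Finset.univ) =
      Matrix.det (Matrix.of fun s t : Fin m => K (z s) (z t)) := by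
  unfold dKer
  set A : Finset ι := Finset.image z Finset.univ with hA
  have hbij : Function.Bijective (fun s => (⟨z s,
      Finset.mem_image_of_mem z (Finset.mem_univ s)⟩ : {a // a ∈ A})) := by
    constructor
    · intro a b hab
      exact hz (congrArg Subtype.val hab)
    · rintro ⟨a, ha⟩
      rcases Finset.mem_image.mp ha with ⟨s, _, hs⟩
      exact ⟨s, Subtype.ext hs⟩
  set e : Fin m ≃ {a // a ∈ A} := Equiv.ofBijective _ hbij with he
  have happ : ∀ v, ((e v : {a // a ∈ A}) : ι) = z v := fun v => rfl
  have hze : ∀ u : {a // a ∈ A}, z (e.symm u) = (u : ι) := by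
    intro u
    rw [← happ]
    rw [e.apply_symm_apply]
  set σ : Fin A.card ≃ Fin m := A.equivFin.symm.trans e.symm with hσ
  have key : ∀ s : Fin A.card, (A.equivFin.symm s : ι) = z (σ s) := by
    intro s
    rw [hσ]
    simp [hze]
  have : (Matrix.of fun s t : Fin A.card =>
      K ((A.equivFin.symm s : ι)) ((A.equivFin.symm t : ι))) =
      (Matrix.of fun s t : Fin m => K (z s) (z t)).submatrix σ σ := by
    ext s t
    simp [key]
  rw [this, Matrix.det_submatrix_equiv_self]

set_option maxHeartbeats 2000000 in
lemma mainRec {ι : Type} [DecidableEq ι] (K : ι → ι → ℝ) (N : ℕ)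
    (hrep : ∀ i j, HasSum (fun y => K i y * K y j) (K i j))
    (htr : HasSum (fun y => K y y) (N : ℝ))
    (hpos : ∀ A : Finset ι, A.card = N → 0 ≤ dKer K A) :
    ∀ d k : ℕ, k + d = N → ∀ x : Fin k → ι, Function.Injective x →
      HasSum (fun A : {A : Finset ι // A.card = N ∧ ∀ s, x s ∈ A} => dKer K A.1)
        (Matrix.det (Matrix.of fun s t : Fin k => K (x s) (x t))) := by
  intro d
  induction d with
  | zero =>
    intro k hk x hx
    subst hk
    rw [Nat.add_zero] at *
    set A₀ : Finset ι := Finset.image x Finset.univ with hA₀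
    have hcard : A₀.card = k := by
      rw [hA₀, Finset.card_image_of_injective _ hx, Finset.card_univ, Fintype.card_fin]
    have hmem : ∀ s, x s ∈ A₀ := fun s => Finset.mem_image_of_mem x (Finset.mem_univ s)
    set b : {A : Finset ι // A.card = k ∧ ∀ s, x s ∈ A} := ⟨A₀, hcard, hmem⟩ with hb
    have huniq : ∀ b' : {A : Finset ι // A.card = k ∧ ∀ s, x s ∈ A}, b' = b := by
      rintro ⟨A, hA, hmemA⟩
      have hsub : A₀ ⊆ A := by
        intro i hi
        rcases Finset.mem_image.mp hi with ⟨s, _, rfl⟩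
        exact hmemA s
      have : A₀ = A := Finset.eq_of_subset_of_card_le hsub (by rw [hA, hcard])
      exact Subtype.ext this.symm
    have hs : HasSum (fun A : {A : Finset ι // A.card = k ∧ ∀ s, x s ∈ A} => dKer K A.1)
        (dKer K b.1) := hasSum_single b (fun b' hb' => absurd (huniq b') hb')
    have : dKer K b.1 = Matrix.det (Matrix.of fun s t : Fin k => K (x s) (x t)) :=
      dKer_eq K x hx
    rwa [this] at hs
  | succ d IH =>
    intro k hk x hx
    have hkN : k < N := by omega
    set rx : Finset ι := Finset.image x Finset.univ with hrx
    have hrxcard : rx.card = k := by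
      rw [hrx, Finset.card_image_of_injective _ hx, Finset.card_univ, Fintype.card_fin]
    set c : ℝ := (N : ℝ) - k with hc
    have hcpos : 0 < c := by
      rw [hc]
      have : (k : ℝ) < (N : ℝ) := by exact_mod_cast hkN
      linarith
    set Dk : ℝ := Matrix.det (Matrix.of fun s t : Fin k => K (x s) (x t)) with hDk
    set g : ι → ℝ := fun y => Matrix.det (Matrix.of fun s t : Fin (k+1) =>
      K ((Fin.cons y x : Fin _ → ι) s) ((Fin.cons y x : Fin _ → ι) t)) with hg
    -- Step 2 : sum over y outside rx
    have hvanish : ∀ y ∈ rx, g y = 0 := by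
      intro y hy
      rw [hg]
      rcases Finset.mem_image.mp hy with ⟨s₀, _, hs₀⟩
      apply Matrix.det_zero_of_row_eq (i := (0 : Fin (k+1))) (j := Fin.succ s₀)
      · exact (Fin.succ_ne_zero s₀).symm
      · funext t
        simp [Fin.cons_zero, Fin.cons_succ, hs₀]
    have step2 : HasSum (fun y : {y : ι // y ∉ rx} => g y.1) (c * Dk) := by
      apply (Finset.hasSum_compl_iff (f := g) rx).mpr
      have hzero : ∑ y ∈ rx, g y = 0 := Finset.sum_eq_zero hvanish
      rw [hzero, add_zero, hg]
      exact intOut K N hrep htr k x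
    -- Step 1 : inner sums
    have step1 : ∀ y : {y : ι // y ∉ rx},
        HasSum (fun A : {A : Finset ι //
            A.card = N ∧ ∀ s, (Fin.cons y.1 x : Fin (k+1) → ι) s ∈ A} => dKer K A.1)
          (g y.1) := by
      intro y
      rw [hg]
      apply IH (k+1) (by omega)
      apply Fin.cons_injective_of_injective _ hx
      intro hmem
      rcases hmem with ⟨s, hs⟩
      exact y.2 (Finset.mem_image.mpr ⟨s, Finset.mem_univ s, hs⟩)
    -- the sigma type and its summability
    set L := (Σ y : {y : ι // y ∉ rx}, {A : Finset ι //
        A.card = N ∧ ∀ s, (Fin.cons y.1 x : Fin (k+1) → ι) s ∈ A}) with hL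
    set F : L → ℝ := fun l => dKer K l.2.1 with hF
    have hFnn : ∀ l : L, 0 ≤ F l := fun l => hpos _ l.2.2.1
    have hsummable : Summable F := by
      rw [summable_sigma_of_nonneg hFnn]
      constructor
      · exact fun y => (step1 y).summable
      · have : (fun y : {y : ι // y ∉ rx} => ∑' A, F ⟨y, A⟩) =
            fun y : {y : ι // y ∉ rx} => g y.1 := by
          funext y
          exact (step1 y).tsum_eq
        rw [this]
        exact step2.summable
    have hFsum : HasSum F (c * Dk) := by
      rw [hsummable.hasSum_iff]
      rw [Summable.tsum_sigma' (fun y => (step1 y).summable) hsummable]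
      calc ∑' (y : {y : ι // y ∉ rx}) (A : {A : Finset ι //
            A.card = N ∧ ∀ s, (Fin.cons y.1 x : Fin (k+1) → ι) s ∈ A}), dKer K A.1
          = ∑' y : {y : ι // y ∉ rx}, g y.1 := by
            congr 1
            funext y
            exact (step1 y).tsum_eq
        _ = c * Dk := step2.tsum_eq
    -- transport along the equivalence
    set R := (Σ A : {A : Finset ι // A.card = N ∧ ∀ s, x s ∈ A}, {y : ι // y ∈ A.1 \ rx})
      with hR
    let E : L ≃ R :=
      { toFun := fun l => ⟨⟨l.2.1, l.2.2.1, fun s => (by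
          have := l.2.2.2 s.succ
          rwa [Fin.cons_succ] at this)⟩,
          ⟨l.1.1, (by
            rw [Finset.mem_sdiff]
            refine ⟨?_, l.1.2⟩
            have := l.2.2.2 0
            rwa [Fin.cons_zero] at this)⟩⟩,
        invFun := fun r => ⟨⟨r.2.1, (Finset.mem_sdiff.mp r.2.2).2⟩,
          ⟨r.1.1, r.1.2.1, fun s => (by
            refine Fin.cases ?_ (fun s' => ?_) s
            · rw [Fin.cons_zero]
              exact (Finset.mem_sdiff.mp r.2.2).1
            · rw [Fin.cons_succ]
              exact r.1.2.2 s')⟩⟩,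
        left_inv := fun l => rfl,
        right_inv := fun r => rfl }
    have hcomp : F = (fun r : R => dKer K r.1.1) ∘ E := funext fun l => rfl
    have hFR : HasSum (fun r : R => dKer K r.1.1) (c * Dk) := by
      rw [hcomp] at hFsum
      exact E.hasSum_iff.mp hFsum
    -- fiberwise sums over R
    have hfib : ∀ A : {A : Finset ι // A.card = N ∧ ∀ s, x s ∈ A},
        HasSum (fun _ : {y : ι // y ∈ A.1 \ rx} => dKer K A.1) (c * dKer K A.1) := by
      intro A
      have h1 : HasSum (fun _ : {y : ι // y ∈ A.1 \ rx} => dKer K A.1)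
          ((A.1 \ rx).card • dKer K A.1) := by
        have := hasSum_fintype (fun _ : {y : ι // y ∈ A.1 \ rx} => dKer K A.1)
        rwa [Finset.sum_const, Finset.card_univ, Fintype.card_coe] at this
      have hsub : rx ⊆ A.1 := by
        intro i hi
        rcases Finset.mem_image.mp hi with ⟨s, _, rfl⟩
        exact A.2.2 s
      have hcard : (A.1 \ rx).card = N - k := by
        rw [Finset.card_sdiff_of_subset hsub, hrxcard, A.2.1]
      rw [hcard] at h1
      have : ((N - k : ℕ) : ℝ) = c := by
        rw [hc, Nat.cast_sub hkN.le]
      rw [nsmul_eq_mul, this] at h1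
      exact h1
    have hAsum : HasSum (fun A : {A : Finset ι // A.card = N ∧ ∀ s, x s ∈ A} =>
        c * dKer K A.1) (c * Dk) := HasSum.sigma hFR hfib
    have := hAsum.mul_left c⁻¹
    simp only [inv_mul_cancel_left₀ (ne_of_gt hcpos)] at this
    exact this

lemma vsq_eq {ι : Type} [DecidableEq ι] (X : ι → ℝ) (hX : Function.Injective X)
    {N : ℕ} (z : Fin N → ι) (hz : Function.Injective z) :
    vandermondeSq X (Finset.image z Finset.univ) =
      (∏ i : Fin N, ∏ j ∈ Finset.Ioi i, (X (z j) - X (z i))) ^ 2 := by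
  classical
  set g : Fin N × Fin N → ℝ := fun p => (X (z p.1) - X (z p.2)) ^ 2 with hg
  have gsymm : ∀ p : Fin N × Fin N, g p.swap = g p := by
    intro p; simp only [hg, Prod.fst_swap, Prod.snd_swap]; ring
  have gnn : ∀ p : Fin N × Fin N, 0 ≤ g p := fun p => sq_nonneg _
  set Plt : Finset (Fin N × Fin N) :=
    (Finset.univ ×ˢ Finset.univ).filter (fun p => p.1 < p.2) with hPlt
  set Pgt : Finset (Fin N × Fin N) :=
    (Finset.univ ×ˢ Finset.univ).filter (fun p => p.2 < p.1) with hPgt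
  set PX : Finset (Fin N × Fin N) :=
    (Finset.univ ×ˢ Finset.univ).filter (fun p => X (z p.1) < X (z p.2)) with hPX
  set PXgt : Finset (Fin N × Fin N) :=
    (Finset.univ ×ˢ Finset.univ).filter (fun p => X (z p.2) < X (z p.1)) with hPXgt
  set Pne : Finset (Fin N × Fin N) :=
    (Finset.univ ×ˢ Finset.univ).filter (fun p => p.1 ≠ p.2) with hPne
  have hXz : Function.Injective (fun i => X (z i)) := hX.comp hz
  -- swap product identities
  have swap_prod : ∀ (s t : Finset (Fin N × Fin N)), (∀ p ∈ s, p.swap ∈ t) →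
      (∀ p ∈ t, p.swap ∈ s) → ∏ p ∈ s, g p = ∏ p ∈ t, g p := by
    intro s t hst hts
    refine Finset.prod_bij (fun p _ => p.swap) hst ?_ ?_ ?_
    · intro a _ b _ hab
      exact Prod.swap_injective hab
    · intro b hb
      exact ⟨b.swap, hts b hb, Prod.swap_swap b⟩
    · intro a _
      rw [gsymm]
  have h1 : Pne = Plt ∪ Pgt := by
    ext p
    simp only [hPne, hPlt, hPgt, Finset.mem_union, Finset.mem_filter, Finset.mem_product,
      Finset.mem_univ, true_and]
    constructor
    · intro h; exact lt_or_gt_of_ne h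
    · rintro (h | h); exact ne_of_lt h; exact (ne_of_lt h).symm
  have h2 : Pne = PX ∪ PXgt := by
    ext p
    simp only [hPne, hPX, hPXgt, Finset.mem_union, Finset.mem_filter, Finset.mem_product,
      Finset.mem_univ, true_and]
    constructor
    · intro h
      have : X (z p.1) ≠ X (z p.2) := fun hc => h (hz (hX hc))
      exact lt_or_gt_of_ne this
    · rintro (h | h)
      · exact fun hc => absurd (congrArg (fun i => X (z i)) hc) (ne_of_lt h)
      · exact fun hc => absurd (congrArg (fun i => X (z i)) hc) (ne_of_gt h)
  have hd1 : Disjoint Plt Pgt := by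
    rw [Finset.disjoint_left]
    intro p hp hq
    simp only [hPlt, hPgt, Finset.mem_filter] at hp hq
    exact absurd (hp.2.trans hq.2) (lt_irrefl _)
  have hd2 : Disjoint PX PXgt := by
    rw [Finset.disjoint_left]
    intro p hp hq
    simp only [hPX, hPXgt, Finset.mem_filter] at hp hq
    exact absurd (hp.2.trans hq.2) (lt_irrefl _)
  have e1 : ∏ p ∈ Pne, g p = (∏ p ∈ Plt, g p) ^ 2 := by
    rw [h1, Finset.prod_union hd1, sq]
    congr 1
    apply swap_prod
    · intro p hp
      simp only [hPlt, hPgt, Finset.mem_filter, Finset.mem_product, Finset.mem_univ,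
        true_and, Prod.fst_swap, Prod.snd_swap] at *
      exact hp
    · intro p hp
      simp only [hPlt, hPgt, Finset.mem_filter, Finset.mem_product, Finset.mem_univ,
        true_and, Prod.fst_swap, Prod.snd_swap] at *
      exact hp
  have e2 : ∏ p ∈ Pne, g p = (∏ p ∈ PX, g p) ^ 2 := by
    rw [h2, Finset.prod_union hd2, sq]
    congr 1
    apply swap_prod
    · intro p hp
      simp only [hPX, hPXgt, Finset.mem_filter, Finset.mem_product, Finset.mem_univ,
        true_and, Prod.fst_swap, Prod.snd_swap] at *
      exact hp
    · intro p hp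
      simp only [hPX, hPXgt, Finset.mem_filter, Finset.mem_product, Finset.mem_univ,
        true_and, Prod.fst_swap, Prod.snd_swap] at *
      exact hp
  have ePXlt : ∏ p ∈ PX, g p = ∏ p ∈ Plt, g p := by
    have hnn1 : 0 ≤ ∏ p ∈ PX, g p := Finset.prod_nonneg fun p _ => gnn p
    have hnn2 : 0 ≤ ∏ p ∈ Plt, g p := Finset.prod_nonneg fun p _ => gnn p
    have h := e1.symm.trans e2
    exact (sq_eq_sq₀ hnn1 hnn2).mp h.symm
  -- vandermondeSq = ∏ over PX
  have eV : vandermondeSq X (Finset.image z Finset.univ) = ∏ p ∈ PX, g p := by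
    unfold vandermondeSq
    refine (Finset.prod_bij (fun (p : Fin N × Fin N) _ => (z p.1, z p.2)) ?_ ?_ ?_ ?_).symm
    · intro p hp
      simp only [hPX, Finset.mem_filter, Finset.mem_product, Finset.mem_univ, true_and] at hp
      simp only [Finset.mem_filter, Finset.mem_product]
      exact ⟨⟨Finset.mem_image_of_mem z (Finset.mem_univ _),
        Finset.mem_image_of_mem z (Finset.mem_univ _)⟩, hp⟩
    · intro a _ b _ hab
      have h1 := congrArg Prod.fst hab
      have h2 := congrArg Prod.snd hab
      simp only at h1 h2
      exact Prod.ext (hz h1) (hz h2)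
    · rintro ⟨u, v⟩ hb
      simp only [Finset.mem_filter, Finset.mem_product] at hb
      rcases Finset.mem_image.mp hb.1.1 with ⟨a, _, ha⟩
      rcases Finset.mem_image.mp hb.1.2 with ⟨b', _, hb'⟩
      refine ⟨(a, b'), ?_, by simp [ha, hb']⟩
      simp only [hPX, Finset.mem_filter, Finset.mem_product, Finset.mem_univ, true_and]
      rw [ha, hb']
      exact hb.2
    · intro p _
      rfl
  -- double product = ∏ over Plt
  have eD : (∏ i : Fin N, ∏ j ∈ Finset.Ioi i, (X (z j) - X (z i))) ^ 2
      = ∏ p ∈ Plt, g p := by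
    rw [← Finset.prod_pow]
    have : ∀ i : Fin N, (∏ j ∈ Finset.Ioi i, (X (z j) - X (z i))) ^ 2
        = ∏ j ∈ Finset.Ioi i, g (i, j) := by
      intro i
      rw [← Finset.prod_pow]
      refine Finset.prod_congr rfl fun j _ => ?_
      simp only [hg]
      ring
    rw [Finset.prod_congr rfl fun i _ => this i, hPlt, Finset.prod_filter,
      Finset.prod_product]
    refine Finset.prod_congr rfl fun i _ => ?_
    rw [← Finset.prod_filter]
    refine (Finset.prod_congr ?_ fun j _ => rfl)
    ext j
    simp
  rw [eV, ePXlt, eD]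

lemma dKer_VW {ι : Type} [DecidableEq ι] (X : ι → ℝ) (hX : Function.Injective X)
    (w : ι → ℝ) (hw : ∀ i, 0 < w i) (N : ℕ) (q : Fin N → Polynomial ℝ)
    (hdeg : ∀ m : Fin N, (q m).degree = (m : ℕ))
    (A : Finset ι) (hA : A.card = N) :
    dKer (fun i j => ∑ m : Fin N, opFun (q m) X w i * opFun (q m) X w j) A
      = (∏ m : Fin N, (q m).leadingCoeff) ^ 2 *
        (vandermondeSq X A * weightProd w A) := by
  classical
  set K : ι → ι → ℝ :=
    fun i j => ∑ m : Fin N, opFun (q m) X w i * opFun (q m) X w j with hK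
  set z : Fin N → ι :=
    fun s => ((A.equivFin.symm (Fin.cast hA.symm s) : {a // a ∈ A}) : ι) with hzdef
  have hz : Function.Injective z := by
    intro a b hab
    have := A.equivFin.symm.injective (Subtype.ext hab)
    exact Fin.cast_injective hA.symm this
  have himg : Finset.image z Finset.univ = A := by
    apply Finset.eq_of_subset_of_card_le
    · intro i hi
      rcases Finset.mem_image.mp hi with ⟨s, _, rfl⟩
      exact (A.equivFin.symm (Fin.cast hA.symm s)).2
    · rw [hA, Finset.card_image_of_injective _ hz, Finset.card_univ, Fintype.card_fin]
  have hnatdeg : ∀ m : Fin N, (q m).natDegree = (m : ℕ) :=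
    fun m => Polynomial.natDegree_eq_of_degree_eq_some (hdeg m)
  set c : ℝ := ∏ m : Fin N, (q m).leadingCoeff with hc
  set P : Matrix (Fin N) (Fin N) ℝ := Matrix.of fun m t => opFun (q m) X w (z t) with hP
  set Q : Matrix (Fin N) (Fin N) ℝ := Matrix.of fun m t => (q m).eval (X (z t)) with hQ
  have hGram : (Matrix.of fun s t : Fin N => K (z s) (z t)) = Pᵀ * P := by
    ext s t
    simp [Matrix.mul_apply, hK, hP]
  have hPQ : P = Q * Matrix.diagonal (fun t : Fin N => Real.sqrt (w (z t))) := by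
    ext m t
    simp [hP, hQ, Matrix.mul_diagonal, opFun]
  have hQt : Qᵀ = Matrix.vandermonde (fun t => X (z t)) *
      (Matrix.of fun i j : Fin N => (q j).coeff i) := by
    have h := Matrix.eval_matrixOfPolynomials_eq_vandermonde_mul_matrixOfPolynomials
      (v := fun t => X (z t)) (p := q) (fun m => le_of_eq (hnatdeg m))
    rw [← h]
    ext i j
    simp [hQ]
  have detC : (Matrix.of fun i j : Fin N => (q j).coeff i).det = c := by
    rw [Matrix.det_of_upperTriangular]
    · refine Finset.prod_congr rfl fun m _ => ?_
      rw [Matrix.of_apply, Polynomial.leadingCoeff, hnatdeg]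
    · intro i j hij
      apply Polynomial.coeff_eq_zero_of_natDegree_lt
      rw [hnatdeg]
      exact hij
  have hdetQ : Q.det = (∏ i : Fin N, ∏ j ∈ Finset.Ioi i, (X (z j) - X (z i))) * c := by
    rw [← Matrix.det_transpose Q, hQt, Matrix.det_mul, Matrix.det_vandermonde, detC]
  have hdetP : P.det =
      (∏ i : Fin N, ∏ j ∈ Finset.Ioi i, (X (z j) - X (z i))) * c *
        ∏ t : Fin N, Real.sqrt (w (z t)) := by
    rw [hPQ, Matrix.det_mul, Matrix.det_diagonal, hdetQ]
  have hsqrt : (∏ t : Fin N, Real.sqrt (w (z t))) ^ 2 = ∏ t : Fin N, w (z t) := by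
    rw [← Finset.prod_pow]
    exact Finset.prod_congr rfl fun t _ => Real.sq_sqrt (hw (z t)).le
  have hW : weightProd w A = ∏ t : Fin N, w (z t) := by
    rw [← himg]
    unfold weightProd
    rw [Finset.prod_image]
    intro a _ b _ hab
    exact hz hab
  have hV : vandermondeSq X A =
      (∏ i : Fin N, ∏ j ∈ Finset.Ioi i, (X (z j) - X (z i))) ^ 2 := by
    rw [← himg]
    exact vsq_eq X hX z hz
  calc dKer K A = Matrix.det (Matrix.of fun s t : Fin N => K (z s) (z t)) := by
        rw [← himg, dKer_eq K z hz]
    _ = P.det * P.det := by rw [hGram, Matrix.det_mul, Matrix.det_transpose]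
    _ = ((∏ i : Fin N, ∏ j ∈ Finset.Ioi i, (X (z j) - X (z i))) ^ 2) * c ^ 2 *
          ((∏ t : Fin N, Real.sqrt (w (z t))) ^ 2) := by rw [hdetP]; ring
    _ = c ^ 2 * (vandermondeSq X A * weightProd w A) := by
        rw [hsqrt, hW, hV]; ring

section KernelProps

variable {ι : Type} (X : ι → ℝ) (w : ι → ℝ) {N : ℕ} (q : Fin N → Polynomial ℝ)

lemma kerTrace (horth : ∀ m l : Fin N,
    HasSum (fun i => opFun (q m) X w i * opFun (q l) X w i)
      (if m = l then 1 else 0)) : HasSum (fun j =>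
    ∑ m : Fin N, opFun (q m) X w j * opFun (q m) X w j) ((N : ℝ)) := by
  have h := hasSum_sum (s := (Finset.univ : Finset (Fin N)))
    (f := fun m j => opFun (q m) X w j * opFun (q m) X w j)
    (a := fun _ => (1 : ℝ)) (fun m _ => by simpa using horth m m)
  simpa using h

lemma kerRep (horth : ∀ m l : Fin N,
    HasSum (fun i => opFun (q m) X w i * opFun (q l) X w i)
      (if m = l then 1 else 0)) (i j : ι) : HasSum (fun y =>
    (∑ m : Fin N, opFun (q m) X w i * opFun (q m) X w y) *
    (∑ m : Fin N, opFun (q m) X w y * opFun (q m) X w j))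
    (∑ m : Fin N, opFun (q m) X w i * opFun (q m) X w j) := by
  set p : Fin N → ι → ℝ := fun m i => opFun (q m) X w i with hp
  have hfun : ∀ y, (∑ m : Fin N, p m i * p m y) * (∑ l : Fin N, p l y * p l j)
      = ∑ m : Fin N, ∑ l : Fin N, (p m i * p l j) * (p m y * p l y) := by
    intro y
    rw [Finset.sum_mul_sum]
    refine Finset.sum_congr rfl fun m _ => Finset.sum_congr rfl fun l _ => ?_
    ring
  have h : HasSum (fun y => ∑ m : Fin N, ∑ l : Fin N, (p m i * p l j) * (p m y * p l y))
      (∑ m : Fin N, ∑ l : Fin N, (p m i * p l j) * (if m = l then 1 else 0)) := by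
    refine hasSum_sum fun m _ => hasSum_sum fun l _ => ?_
    exact (horth m l).mul_left _
  have hval : (∑ m : Fin N, ∑ l : Fin N, (p m i * p l j) * (if m = l then 1 else 0))
      = ∑ m : Fin N, p m i * p m j := by
    refine Finset.sum_congr rfl fun m _ => ?_
    simp [mul_ite, Finset.sum_ite_eq]
  rw [hval] at h
  rw [funext hfun]
  exact h

end KernelProps

lemma detGramZero {ι : Type} (X : ι → ℝ) (w : ι → ℝ) {N n : ℕ} (hNn : N < n)
    (q : Fin N → Polynomial ℝ) (x : Fin n → ι) :
    Matrix.det (Matrix.of fun s t : Fin n =>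
      ∑ m : Fin N, opFun (q m) X w (x s) * opFun (q m) X w (x t)) = 0 := by
  classical
  set P : Matrix (Fin N) (Fin n) ℝ := Matrix.of fun m t => opFun (q m) X w (x t) with hP
  have hGram : (Matrix.of fun s t : Fin n =>
      ∑ m : Fin N, opFun (q m) X w (x s) * opFun (q m) X w (x t)) = Pᵀ * P := by
    ext s t
    simp [Matrix.mul_apply, hP]
  rw [hGram]
  have hni : ¬ Function.Injective P.mulVecLin := by
    intro hinj
    have := LinearMap.finrank_le_finrank_of_injective hinj
    rw [Module.finrank_fintype_fun_eq_card, Module.finrank_fintype_fun_eq_card] at this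
    simp only [Fintype.card_fin] at this
    omega
  have : ∃ v : Fin n → ℝ, v ≠ 0 ∧ P.mulVec v = 0 := by
    have hker : LinearMap.ker P.mulVecLin ≠ ⊥ := by
      intro hbot
      exact hni (LinearMap.ker_eq_bot.mp hbot)
    rcases (LinearMap.ker P.mulVecLin).ne_bot_iff.mp hker with ⟨v, hv, hv0⟩
    exact ⟨v, hv0, hv⟩
  rcases this with ⟨v, hv0, hPv⟩
  apply (Matrix.exists_mulVec_eq_zero_iff).mp
  refine ⟨v, hv0, ?_⟩
  rw [← Matrix.mulVec_mulVec, hPv, Matrix.mulVec_zero]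

set_option maxHeartbeats 2000000 in
/-- The `N`-point orthogonal polynomial ensemble is determinantal with
correlation kernel the normalized Christoffel–Darboux kernel
`K(i,j) = ∑_{m<N} p_m(i) p_m(j)`: for pairwise distinct `i₁,…,iₙ`, the `n`-th correlation
function `∑_{A ⊇ {i₁,…,iₙ}, |A| = N} V(A)·W(A) / Z` equals `det [K(i_s, i_t)]`. -/
theorem stmt_13
    (ι : Type) [Countable ι]
    (X : ι → ℝ) (hX : Function.Injective X)
    (w : ι → ℝ) (hw : ∀ i, 0 < w i)
    (hmom : ∀ n : ℕ, Summable fun i => |X i| ^ n * w i)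
    (N : ℕ) (hN : 1 ≤ N) (hcard : ∃ A : Finset ι, A.card = N)
    (q : Fin N → Polynomial ℝ)
    (hdeg : ∀ m : Fin N, (q m).degree = (m : ℕ))
    (horth : ∀ m l : Fin N,
      HasSum (fun i => opFun (q m) X w i * opFun (q l) X w i)
        (if m = l then 1 else 0)) :
    ∀ n : ℕ, 1 ≤ n → ∀ x : Fin n → ι, Function.Injective x →
      (∑' A : {A : Finset ι // A.card = N ∧ ∀ s, x s ∈ A},
          vandermondeSq X A.1 * weightProd w A.1)
        / (∑' A : {A : Finset ι // A.card = N},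
            vandermondeSq X A.1 * weightProd w A.1)
      = Matrix.det (Matrix.of fun s t : Fin n =>
          ∑ m : Fin N, opFun (q m) X w (x s) * opFun (q m) X w (x t)) := by
  classical
  intro n hn x hx
  set K : ι → ι → ℝ :=
    fun i j => ∑ m : Fin N, opFun (q m) X w i * opFun (q m) X w j with hK
  set c : ℝ := ∏ m : Fin N, (q m).leadingCoeff with hc
  have hc0 : c ≠ 0 := by
    rw [hc, Finset.prod_ne_zero_iff]
    intro m _
    rw [Polynomial.leadingCoeff_ne_zero]
    intro h0
    have := hdeg m
    rw [h0, Polynomial.degree_zero] at this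
    exact absurd this.symm (by simp)
  have hc2 : (c ^ 2) ≠ 0 := pow_ne_zero _ hc0
  have hrep : ∀ i j, HasSum (fun y => K i y * K y j) (K i j) := kerRep X w q horth
  have htr : HasSum (fun j => K j j) ((N : ℝ)) := kerTrace X w q horth
  have hpos : ∀ A : Finset ι, A.card = N → 0 ≤ dKer K A := by
    intro A hA
    rw [hK, dKer_VW X hX w hw N q hdeg A hA]
    refine mul_nonneg (sq_nonneg _) (mul_nonneg ?_ ?_)
    · exact Finset.prod_nonneg fun p _ => sq_nonneg _
    · exact Finset.prod_nonneg fun i _ => (hw i).le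
  have hVW : ∀ A : Finset ι, A.card = N →
      vandermondeSq X A * weightProd w A = (c ^ 2)⁻¹ * dKer K A := by
    intro A hA
    rw [hK, dKer_VW X hX w hw N q hdeg A hA, ← hc, inv_mul_cancel_left₀ hc2]
  have hden : HasSum (fun A : {A : Finset ι // A.card = N} =>
      vandermondeSq X A.1 * weightProd w A.1) ((c ^ 2)⁻¹) := by
    have h0 := mainRec K N hrep htr hpos N 0 (by omega) Fin.elim0 (fun a => a.elim0)
    rw [Matrix.det_fin_zero] at h0
    let e : {A : Finset ι // A.card = N ∧ ∀ s : Fin 0, Fin.elim0 s ∈ A} ≃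
        {A : Finset ι // A.card = N} :=
      ⟨fun A => ⟨A.1, A.2.1⟩, fun A => ⟨A.1, A.2, fun s => s.elim0⟩,
        fun A => rfl, fun A => rfl⟩
    have hcomp : (fun A : {A : Finset ι // A.card = N} => dKer K A.1) ∘ e =
        (fun A : {A : Finset ι // A.card = N ∧ ∀ s : Fin 0, Fin.elim0 s ∈ A} =>
          dKer K A.1) := funext fun A => rfl
    have h1 : HasSum (fun A : {A : Finset ι // A.card = N} => dKer K A.1) 1 := by
      apply e.hasSum_iff.mp
      rw [hcomp]
      exact h0
    have h2 := h1.mul_left (c ^ 2)⁻¹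
    rw [mul_one] at h2
    rw [show (fun A : {A : Finset ι // A.card = N} =>
        vandermondeSq X A.1 * weightProd w A.1) =
        fun A : {A : Finset ι // A.card = N} => (c ^ 2)⁻¹ * dKer K A.1 from
      funext fun A => hVW A.1 A.2]
    exact h2
  by_cases hnN : n ≤ N
  · have hnum := mainRec K N hrep htr hpos (N - n) n (by omega) x hx
    have hnum' : HasSum (fun A : {A : Finset ι // A.card = N ∧ ∀ s, x s ∈ A} =>
        vandermondeSq X A.1 * weightProd w A.1)
        ((c ^ 2)⁻¹ * Matrix.det (Matrix.of fun s t : Fin n => K (x s) (x t))) := by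
      rw [show (fun A : {A : Finset ι // A.card = N ∧ ∀ s, x s ∈ A} =>
          vandermondeSq X A.1 * weightProd w A.1) =
          fun A : {A : Finset ι // A.card = N ∧ ∀ s, x s ∈ A} =>
            (c ^ 2)⁻¹ * dKer K A.1 from
        funext fun A => hVW A.1 A.2.1]
      exact hnum.mul_left _
    rw [hnum'.tsum_eq, hden.tsum_eq]
    rw [mul_comm, mul_div_assoc, div_self (inv_ne_zero hc2), mul_one]
  · push_neg at hnN
    have hempty : IsEmpty {A : Finset ι // A.card = N ∧ ∀ s, x s ∈ A} := by
      refine ⟨fun A => ?_⟩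
      have hsub : Finset.image x Finset.univ ⊆ A.1 := by
        intro i hi
        rcases Finset.mem_image.mp hi with ⟨s, _, rfl⟩
        exact A.2.2 s
      have hle := Finset.card_le_card hsub
      rw [Finset.card_image_of_injective _ hx, Finset.card_univ, Fintype.card_fin,
        A.2.1] at hle
      omega
    rw [tsum_empty, zero_div]
    exact (detGramZero X w hnN q x).symm
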